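/- Let f : GF(p)^{2m} → GF(p) be a feasible Latin or negative Latin square type function with dual f*. Then for each 1 ≤ i ≤ p, the i-th component indicator f*_i of f* satisfies f*_i(x) = (1/N)·f̂_i(x) + r_i/N − r_i·δ_0(x) for all x, where δ_0 is the indicator of {0}. -/

import Mathlib

open Finset BigOperators

noncomputable def zeta (p : ℕ) : ℂ := Complex.exp (2 * Real.pi * Complex.I / p)

def ip {p n : ℕ} (x y : Fin n → ZMod p) : ZMod p := ∑ i, x i * y i

noncomputable def walsh {p n : ℕ} [NeZero p]
    (f : (Fin n → ZMod p) → ZMod p) (x : Fin n → ZMod p) : ℂ :=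
  ∑ y, zeta p ^ (f y - ip x y).val

/-- The component Cayley graph `Γ_i` of `f` on `GF(p)^n`: distinct vertices `x, y` are
adjacent iff `x - y` lies in the connection set `D_i = {z ≠ 0 | f z = i}` (for an even `f`
the symmetrization in `fromRel` is harmless).  For `i ≠ 0` this set is `f⁻¹(i)`, and for
`i = 0` it is `f⁻¹(0) \ {0}`; i.e. `i = 0` plays the role of the index `p`. -/
def cayleyGraph {p n : ℕ} (f : (Fin n → ZMod p) → ZMod p) (i : ZMod p) :
    SimpleGraph (Fin n → ZMod p) :=
  SimpleGraph.fromRel (fun x y => f (x - y) = i)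
/-- The generalized Hadamard vector entry `h(x)_y = ζ^{-⟨x,y⟩}`. -/
noncomputable def hvec {p n : ℕ} [NeZero p] (x y : Fin n → ZMod p) : ℂ :=
  zeta p ^ (-(ip x y)).val

/-- The Fourier transform `f̂_i(x)` of the indicator function of
`D_i = {y ≠ 0 | f y = i}`. -/
noncomputable def fourierInd {p n : ℕ} [NeZero p]
    (f : (Fin n → ZMod p) → ZMod p) (i : ZMod p) (x : Fin n → ZMod p) : ℂ :=
  ∑ y, (if f y = i ∧ y ≠ 0 then (1:ℂ) else 0) * hvec x y

/-! ### auxiliary definitions -/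

noncomputable def ee (p : ℕ) (a : ZMod p) : ℂ := zeta p ^ a.val

noncomputable def chi {n : ℕ} (p : ℕ) [NeZero p] (x y : Fin n → ZMod p) : ℂ :=
  ee p (-(ip x y))

def Dset {p n : ℕ} [NeZero p] (f : (Fin n → ZMod p) → ZMod p) (jj : ZMod p) :
    Finset (Fin n → ZMod p) :=
  univ.filter (fun y => f y = jj ∧ y ≠ 0)

section Helpers
variable {p : ℕ} [NeZero p]

lemma zeta_prim (p : ℕ) [NeZero p] : IsPrimitiveRoot (zeta p) p :=
  Complex.isPrimitiveRoot_exp p (NeZero.ne p)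

lemma ee_zero : ee p 0 = 1 := by simp [ee]

lemma zeta_pow_mod (a : ℕ) : zeta p ^ a = zeta p ^ (a % p) := by
  conv_lhs => rw [← Nat.div_add_mod a p, pow_add, pow_mul, (zeta_prim p).pow_eq_one, one_pow,
    one_mul]

lemma ee_pow_eq_pow (a b : ℕ) (h : a ≡ b [MOD p]) : zeta p ^ a = zeta p ^ b := by
  rw [zeta_pow_mod a, zeta_pow_mod b, h]

lemma ee_add (a b : ZMod p) : ee p (a + b) = ee p a * ee p b := by
  rw [ee, ee, ee, ← pow_add]
  exact ee_pow_eq_pow _ _ (by rw [ZMod.val_add]; exact (Nat.mod_modEq _ p))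

lemma ee_inj {a b : ZMod p} (h : ee p a = ee p b) : a = b :=
  ZMod.val_injective p ((zeta_prim p).pow_inj (ZMod.val_lt a) (ZMod.val_lt b) h)

lemma ee_ne_one {a : ZMod p} (h : a ≠ 0) : ee p a ≠ 1 := by
  intro hc; exact h (ee_inj (by rw [hc, ee_zero]))

lemma sum_ee (hp : 1 < p) : ∑ a : ZMod p, ee p a = 0 := by
  have h1 : zeta p ≠ 1 := by
    have := (zeta_prim p).pow_ne_one_of_pos_of_lt (l := 1) one_ne_zero hp
    simpa using this
  have h2 : ∑ a : ZMod p, ee p a = ∑ k ∈ Finset.range p, zeta p ^ k := by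
    refine Finset.sum_nbij' (i := fun a => ZMod.val a) (j := fun k => (k : ZMod p))
      ?_ ?_ ?_ ?_ ?_
    · exact fun a _ => Finset.mem_range.mpr (ZMod.val_lt a)
    · exact fun a _ => Finset.mem_univ _
    · exact fun a _ => by simp [ZMod.natCast_val, ZMod.cast_id]
    · exact fun k hk => ZMod.val_cast_of_lt (Finset.mem_range.mp hk)
    · exact fun a _ => rfl
  rw [h2, geom_sum_eq h1, (zeta_prim p).pow_eq_one, sub_self, zero_div]

lemma ip_add_right {n : ℕ} (x y z : Fin n → ZMod p) : ip x (y + z) = ip x y + ip x z := by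
  simp [ip, mul_add, Finset.sum_add_distrib]

lemma ip_single {n : ℕ} (x : Fin n → ZMod p) (j : Fin n) : ip x (Pi.single j 1) = x j := by
  simp [ip, Pi.single_apply, mul_ite]

lemma chi_zero_right {n : ℕ} (x : Fin n → ZMod p) : chi p x 0 = 1 := by
  have : ip x (0 : Fin n → ZMod p) = 0 := by simp [ip]
  rw [chi, this, neg_zero, ee_zero]

lemma chi_zero_left {n : ℕ} (y : Fin n → ZMod p) : chi p 0 y = 1 := by
  have : ip (0 : Fin n → ZMod p) y = 0 := by simp [ip]
  rw [chi, this, neg_zero, ee_zero]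

lemma chi_add {n : ℕ} (x y z : Fin n → ZMod p) :
    chi p x (y + z) = chi p x y * chi p x z := by
  rw [chi, chi, chi, ip_add_right, neg_add, ee_add]

lemma hvec_eq_chi {n : ℕ} (x y : Fin n → ZMod p) : hvec x y = chi p x y := rfl

lemma sum_chi {n : ℕ} {x : Fin n → ZMod p} (hx : x ≠ 0) :
    ∑ y : Fin n → ZMod p, chi p x y = 0 := by
  obtain ⟨j, hj⟩ : ∃ j, x j ≠ 0 := by
    by_contra h; push_neg at h; exact hx (funext h)
  have key : ∑ y : Fin n → ZMod p, chi p x y =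
      ∑ y : Fin n → ZMod p, chi p x (y + Pi.single j 1) :=
    Fintype.sum_equiv (Equiv.subRight (Pi.single j 1)) _ _ (fun y => by
      simp [Equiv.subRight_apply, sub_add_cancel])
  have key2 : ∀ y : Fin n → ZMod p,
      chi p x (y + Pi.single j 1) = chi p x y * ee p (-(x j)) := by
    intro y
    have hsingle : chi p x (Pi.single j 1) = ee p (-(x j)) := by rw [chi, ip_single]
    rw [chi_add, hsingle]
  rw [Finset.sum_congr rfl (fun y _ => key2 y), ← Finset.sum_mul] at key
  have hne : ee p (-(x j)) ≠ 1 := ee_ne_one (neg_ne_zero.mpr hj)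
  by_contra hS
  exact hne (mul_left_cancel₀ hS (by rw [← key, mul_one]))

lemma sum_chi_erase {n : ℕ} {x : Fin n → ZMod p} (hx : x ≠ 0) :
    ∑ y ∈ univ.erase (0 : Fin n → ZMod p), chi p x y = -1 := by
  have h1 : chi p x 0 + ∑ y ∈ univ.erase (0 : Fin n → ZMod p), chi p x y
      = ∑ y : Fin n → ZMod p, chi p x y := Finset.add_sum_erase _ _ (mem_univ 0)
  rw [sum_chi hx, chi_zero_right] at h1
  exact eq_neg_of_add_eq_zero_right h1

variable {n : ℕ} {f : (Fin n → ZMod p) → ZMod p} {jj : ZMod p}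

lemma mem_Dset {y : Fin n → ZMod p} : y ∈ Dset f jj ↔ f y = jj ∧ y ≠ 0 := by
  simp [Dset]

lemma fourierInd_eq {x : Fin n → ZMod p} :
    fourierInd f jj x = ∑ y ∈ Dset f jj, chi p x y := by
  rw [fourierInd, Dset, Finset.sum_filter]
  refine Finset.sum_congr rfl fun y _ => ?_
  rw [ite_mul, one_mul, zero_mul, hvec_eq_chi]

lemma adj_iff (heven : ∀ x, f (-x) = f x) (a b : Fin n → ZMod p) :
    (cayleyGraph f jj).Adj a b ↔ a ≠ b ∧ f (a - b) = jj := by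
  rw [cayleyGraph, SimpleGraph.fromRel_adj]
  constructor
  · rintro ⟨h1, h2 | h2⟩
    · exact ⟨h1, h2⟩
    · exact ⟨h1, by rw [← heven, neg_sub]; exact h2⟩
  · rintro ⟨h1, h2⟩; exact ⟨h1, Or.inl h2⟩

open scoped Classical in
lemma card_common (heven : ∀ x, f (-x) = f x) (w : Fin n → ZMod p) :
    Fintype.card ((cayleyGraph f jj).commonNeighbors 0 w)
      = ((Dset f jj).filter (fun y => w - y ∈ Dset f jj)).card := by
  rw [← Set.toFinset_card]
  congr 1
  ext u
  simp only [Set.mem_toFinset, SimpleGraph.mem_commonNeighbors, adj_iff heven,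
    mem_filter, mem_Dset]
  constructor
  · rintro ⟨⟨h1, h2⟩, h3, h4⟩
    rw [zero_sub, heven] at h2
    exact ⟨⟨h2, Ne.symm h1⟩, h4, sub_ne_zero.mpr h3⟩
  · rintro ⟨⟨h1, h2⟩, h3, h4⟩
    exact ⟨⟨Ne.symm h2, by rw [zero_sub, heven]; exact h1⟩, sub_ne_zero.mp h4, h3⟩

open scoped Classical in
lemma card_Dset {k : ℕ} (heven : ∀ x, f (-x) = f x)
    (hreg : (cayleyGraph f jj).IsRegularOfDegree k) : (Dset f jj).card = k := by
  have h1 : (cayleyGraph f jj).neighborFinset 0 = Dset f jj := by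
    ext u
    rw [SimpleGraph.mem_neighborFinset, adj_iff heven, mem_Dset]
    constructor
    · rintro ⟨h1, h2⟩
      rw [zero_sub, heven] at h2
      exact ⟨h2, Ne.symm h1⟩
    · rintro ⟨h1, h2⟩
      exact ⟨Ne.symm h2, by rw [zero_sub, heven]; exact h1⟩
  have h2 := hreg 0
  rw [SimpleGraph.degree, h1] at h2
  exact h2

open scoped Classical in
/-- The spectral quadratic identity from the SRG condition. -/
lemma quad {k l mu : ℕ} (heven : ∀ x, f (-x) = f x)
    (hsrg : (cayleyGraph f jj).IsSRGWith (p ^ n) k l mu)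
    {x : Fin n → ZMod p} (hx : x ≠ 0) :
    fourierInd f jj x * fourierInd f jj x
      = (k : ℂ) - (mu : ℂ) + ((l : ℂ) - (mu : ℂ)) * fourierInd f jj x := by
  have hSS : fourierInd f jj x * fourierInd f jj x
      = ∑ w : Fin n → ZMod p,
          (((Dset f jj).filter (fun y => w - y ∈ Dset f jj)).card : ℂ) * chi p x w := by
    rw [fourierInd_eq, Finset.sum_mul_sum]
    have step1 : ∀ y ∈ Dset f jj, ∑ z ∈ Dset f jj, chi p x y * chi p x z
        = ∑ w : Fin n → ZMod p, (if w - y ∈ Dset f jj then chi p x w else 0) := by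
      intro y _
      have e1 : ∑ z ∈ Dset f jj, chi p x y * chi p x z
          = ∑ z ∈ Dset f jj, chi p x (y + z) :=
        Finset.sum_congr rfl fun z _ => (chi_add x y z).symm
      have e2 : ∑ z ∈ Dset f jj, chi p x (y + z)
          = ∑ w ∈ univ.filter (fun w => w - y ∈ Dset f jj), chi p x w := by
        refine Finset.sum_nbij' (i := fun z => y + z) (j := fun w => w - y) ?_ ?_ ?_ ?_ ?_
        · intro z hz
          simp only [mem_filter, mem_univ, true_and, add_sub_cancel_left]
          exact hz
        · intro w hw
          simp only [mem_filter] at hw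
          exact hw.2
        · intro z _; exact add_sub_cancel_left y z
        · intro w _; simp
        · intro z _; rfl
      rw [e1, e2, Finset.sum_filter]
    rw [Finset.sum_congr rfl step1, Finset.sum_comm]
    refine Finset.sum_congr rfl fun w _ => ?_
    rw [← Finset.sum_filter, Finset.sum_const, nsmul_eq_mul]
  have h0c : ((Dset f jj).filter
      (fun y => (0 : Fin n → ZMod p) - y ∈ Dset f jj)).card = k := by
    have heq : (Dset f jj).filter (fun y => (0 : Fin n → ZMod p) - y ∈ Dset f jj)
        = Dset f jj := by
      refine Finset.filter_true_of_mem fun y hy => ?_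
      rw [mem_Dset] at hy ⊢
      rw [zero_sub]
      exact ⟨by rw [heven]; exact hy.1, neg_ne_zero.mpr hy.2⟩
    rw [heq]
    exact card_Dset heven hsrg.regular
  have hadjc : ∀ w : Fin n → ZMod p, w ≠ 0 → f w = jj →
      ((Dset f jj).filter (fun y => w - y ∈ Dset f jj)).card = l := by
    intro w hw0 hfw
    have hAdj : (cayleyGraph f jj).Adj 0 w := by
      rw [adj_iff heven]
      exact ⟨Ne.symm hw0, by rw [zero_sub, heven]; exact hfw⟩
    have h := hsrg.of_adj 0 w hAdj
    rw [card_common heven] at h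
    exact h
  have hnonc : ∀ w : Fin n → ZMod p, w ≠ 0 → f w ≠ jj →
      ((Dset f jj).filter (fun y => w - y ∈ Dset f jj)).card = mu := by
    intro w hw0 hfw
    have hAdj : ¬ (cayleyGraph f jj).Adj 0 w := by
      rw [adj_iff heven]
      rintro ⟨-, h⟩
      rw [zero_sub, heven] at h
      exact hfw h
    have h := hsrg.of_not_adj (Ne.symm hw0) hAdj
    rw [card_common heven] at h
    exact h
  have hsplit : ∑ w : Fin n → ZMod p,
        (((Dset f jj).filter (fun y => w - y ∈ Dset f jj)).card : ℂ) * chi p x w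
      = (k : ℂ) * chi p x 0
        + ∑ w ∈ univ.erase (0 : Fin n → ZMod p),
            (((Dset f jj).filter (fun y => w - y ∈ Dset f jj)).card : ℂ) * chi p x w := by
    rw [← Finset.add_sum_erase _ _ (mem_univ (0 : Fin n → ZMod p)), h0c]
  have herase : ∀ w ∈ univ.erase (0 : Fin n → ZMod p),
      (((Dset f jj).filter (fun y => w - y ∈ Dset f jj)).card : ℂ) * chi p x w
        = (mu : ℂ) * chi p x w
          + (if f w = jj then ((l : ℂ) - (mu : ℂ)) * chi p x w else 0) := by
    intro w hw
    have hw0 : w ≠ 0 := Finset.ne_of_mem_erase hw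
    by_cases hfw : f w = jj
    · rw [hadjc w hw0 hfw, if_pos hfw]; ring
    · rw [hnonc w hw0 hfw, if_neg hfw]; ring
  have hA : ∑ w ∈ univ.erase (0 : Fin n → ZMod p), (if f w = jj then chi p x w else 0)
      = fourierInd f jj x := by
    rw [← Finset.sum_filter, fourierInd_eq]
    congr 1
    ext w
    simp only [mem_filter, mem_erase, mem_univ, true_and, and_true, mem_Dset]
    tauto
  rw [hSS, hsplit, Finset.sum_congr rfl herase, Finset.sum_add_distrib,
    ← Finset.mul_sum, sum_chi_erase hx, chi_zero_right]
  have : ∑ w ∈ univ.erase (0 : Fin n → ZMod p),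
      (if f w = jj then ((l : ℂ) - (mu : ℂ)) * chi p x w else 0)
      = ((l : ℂ) - (mu : ℂ)) * fourierInd f jj x := by
    rw [← hA, Finset.mul_sum]
    refine Finset.sum_congr rfl fun w _ => ?_
    rw [mul_ite, mul_zero]
  rw [this]
  ring

end Helpers

open scoped Classical in
/-- Let `f : GF(p)^{2m} → GF(p)` be a feasible Latin or negative Latin
square type function with dual `f*` (so `W_f(x) = ζ^{f*(x)} N` for all `x`, `f*(0) = 0`).
Then for each `1 ≤ i ≤ p`, the `i`-th component indicator `f*_i` of `f*` satisfies
`f*_i(x) = (1/N)·f̂_i(x) + r_i/N − r_i·δ_0(x)` for all `x`. -/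
theorem stmt14 (p m : ℕ) [Fact p.Prime] (hodd : p ≠ 2) (hm : 1 ≤ m)
    (f : (Fin (2 * m) → ZMod p) → ZMod p)
    (heven : ∀ x, f (-x) = f x) (h0 : f 0 = 0)
    (N : ℤ) (hN : N = (p : ℤ) ^ m ∨ N = -((p : ℤ) ^ m))
    (R : ZMod p → ℤ)
    (hR : ∀ i : ZMod p, R i = if i = 0 then N / p + 1 else N / p)
    (hSRG : ∀ i : ZMod p, ∃ k l mu : ℕ,
      (k : ℤ) = (N - 1) * R i ∧ (l : ℤ) = N + R i ^ 2 - 3 * R i ∧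
      (mu : ℤ) = R i ^ 2 - R i ∧
      (cayleyGraph f i).IsSRGWith (p ^ (2 * m)) k l mu)
    (fstar : (Fin (2 * m) → ZMod p) → ZMod p) (hstar0 : fstar 0 = 0)
    (hdual : ∀ x, walsh f x = zeta p ^ (fstar x).val * (N : ℂ)) :
    ∀ (i : ZMod p) (x : Fin (2 * m) → ZMod p),
      (if fstar x = i ∧ x ≠ 0 then (1 : ℂ) else 0) =
        (1 / (N : ℂ)) * fourierInd f i x + (R i : ℂ) / (N : ℂ) -
          (R i : ℂ) * (if x = 0 then 1 else 0) := by
  intro i x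
  have hp : p.Prime := Fact.out
  have hp1 : 1 < p := hp.one_lt
  have hdvd : (p : ℤ) ∣ N := by
    rcases hN with h | h <;> rw [h]
    · exact dvd_pow_self _ (by omega)
    · exact (dvd_pow_self (p:ℤ) (by omega : m ≠ 0)).neg_right
  have hNz : N ≠ 0 := by
    have : (p : ℤ) ^ m ≠ 0 := pow_ne_zero _ (by exact_mod_cast hp.ne_zero)
    rcases hN with h | h <;> simp [h, this]
  have hNzC : (N : ℂ) ≠ 0 := Int.cast_ne_zero.mpr hNz
  have hsumR : ∑ jj : ZMod p, (R jj : ℂ) = (N : ℂ) + 1 := by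
    have hz : ∑ jj : ZMod p, R jj = N + 1 := by
      have e1 : ∀ jj : ZMod p, R jj = N / p + (if jj = 0 then 1 else 0) := by
        intro jj; rw [hR]; split_ifs <;> simp
      rw [Finset.sum_congr rfl fun jj _ => e1 jj, Finset.sum_add_distrib,
        Finset.sum_const, Finset.sum_ite_eq' univ (0 : ZMod p) (fun _ => (1:ℤ)),
        if_pos (mem_univ _), card_univ, ZMod.card]
      rw [nsmul_eq_mul]
      rw [Int.mul_ediv_cancel' hdvd]
    exact_mod_cast hz
  by_cases hx0 : x = 0
  · -- the `x = 0` case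
    subst hx0
    obtain ⟨k, l, mu, hk, hl, hmu, hsrg⟩ := hSRG i
    have hF0 : fourierInd f i 0 = ((Dset f i).card : ℂ) := by
      rw [fourierInd_eq]
      rw [Finset.sum_congr rfl fun y _ => chi_zero_left y, Finset.sum_const, nsmul_eq_mul,
        mul_one]
    have hcard : ((Dset f i).card : ℂ) = ((N : ℂ) - 1) * (R i : ℂ) := by
      rw [card_Dset heven hsrg.regular]
      exact_mod_cast hk
    rw [hF0, hcard, if_neg (by simp), if_pos rfl]
    field_simp
    ring
  · -- the `x ≠ 0` case
    have quadfact : ∀ jj : ZMod p,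
        fourierInd f jj x = (N : ℂ) - (R jj : ℂ) ∨ fourierInd f jj x = -(R jj : ℂ) := by
      intro jj
      obtain ⟨k, l, mu, hk, hl, hmu, hsrg⟩ := hSRG jj
      have hq := quad heven hsrg hx0
      have hkC : (k : ℂ) = ((N:ℂ) - 1) * (R jj : ℂ) := by exact_mod_cast hk
      have hlC : (l : ℂ) = (N:ℂ) + (R jj : ℂ) ^ 2 - 3 * (R jj : ℂ) := by exact_mod_cast hl
      have hmuC : (mu : ℂ) = (R jj : ℂ) ^ 2 - (R jj : ℂ) := by exact_mod_cast hmu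
      have key : (fourierInd f jj x - ((N:ℂ) - (R jj : ℂ)))
          * (fourierInd f jj x + (R jj : ℂ)) = 0 := by
        rw [hkC, hlC, hmuC] at hq
        linear_combination hq
      rcases mul_eq_zero.mp key with h | h
      · exact Or.inl (sub_eq_zero.mp h)
      · exact Or.inr (eq_neg_of_add_eq_zero_left h)
    have hsumS : ∑ jj : ZMod p, fourierInd f jj x = -1 := by
      have e1 : ∑ jj : ZMod p, fourierInd f jj x
          = ∑ y : Fin (2*m) → ZMod p, ∑ jj : ZMod p,
              (if f y = jj ∧ y ≠ 0 then (1:ℂ) else 0) * hvec x y := by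
        rw [← Finset.sum_comm]; rfl
      have e2 : ∀ y : Fin (2*m) → ZMod p, ∑ jj : ZMod p,
          (if f y = jj ∧ y ≠ 0 then (1:ℂ) else 0) * hvec x y
          = (if y ≠ 0 then chi p x y else 0) := by
        intro y
        by_cases hy : y = 0
        · simp [hy]
        · simp only [hy, ne_eq, not_false_eq_true, and_true, if_true, hvec_eq_chi,
            ite_mul, one_mul, zero_mul]
          rw [Finset.sum_ite_eq univ (f y) (fun _ => chi p x y), if_pos (mem_univ _)]
      rw [e1, Finset.sum_congr rfl fun y _ => e2 y, ← Finset.sum_filter,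
        Finset.filter_ne' univ 0, sum_chi_erase hx0]
    set c : ZMod p → ℂ := fun jj => (fourierInd f jj x + (R jj : ℂ)) / N with hc
    have hc01 : ∀ jj, c jj = 0 ∨ c jj = 1 := by
      intro jj
      rcases quadfact jj with h | h
      · right; rw [hc]; dsimp only; rw [h]; field_simp; ring
      · left; rw [hc]; dsimp only; rw [h]; field_simp; ring
    have hSc : ∀ jj, fourierInd f jj x = (N:ℂ) * c jj - (R jj : ℂ) := by
      intro jj; rw [hc]; dsimp only; field_simp; ring
    have hcsum : ∑ jj : ZMod p, c jj = 1 := by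
      rw [hc]
      dsimp only
      rw [← Finset.sum_div, Finset.sum_add_distrib, hsumS, hsumR]
      field_simp; ring
    set T : Finset (ZMod p) := univ.filter (fun jj => c jj = 1) with hT
    have hTcard : T.card = 1 := by
      have e3 : (T.card : ℂ) = ∑ jj : ZMod p, c jj := by
        rw [hT, Finset.card_filter]
        push_cast
        refine Finset.sum_congr rfl fun jj _ => ?_
        rcases hc01 jj with h | h <;> rw [h] <;> norm_num
      rw [hcsum] at e3
      exact_mod_cast e3
    obtain ⟨i0, hi0⟩ := Finset.card_eq_one.mp hTcard
    have hci0 : c i0 = 1 := by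
      have : i0 ∈ T := by rw [hi0]; exact Finset.mem_singleton_self i0
      rw [hT, mem_filter] at this
      exact this.2
    have hcne : ∀ jj, jj ≠ i0 → c jj = 0 := by
      intro jj hjj
      rcases hc01 jj with h | h
      · exact h
      · exfalso
        have : jj ∈ T := by rw [hT, mem_filter]; exact ⟨mem_univ _, h⟩
        rw [hi0, Finset.mem_singleton] at this
        exact hjj this
    -- the walsh identity
    have hwalsh0 : walsh f x = ∑ y : Fin (2*m) → ZMod p, ee p (f y) * chi p x y := by
      rw [walsh]
      refine Finset.sum_congr rfl fun y _ => ?_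
      show ee p (f y - ip x y) = _
      rw [sub_eq_add_neg, ee_add]
      rfl
    have hAeq : ∑ jj : ZMod p, ee p jj * fourierInd f jj x
        = ∑ y ∈ univ.erase (0 : Fin (2*m) → ZMod p), ee p (f y) * chi p x y := by
      have e1 : ∑ jj : ZMod p, ee p jj * fourierInd f jj x
          = ∑ y : Fin (2*m) → ZMod p, ∑ jj : ZMod p,
              (if f y = jj ∧ y ≠ 0 then ee p jj * chi p x y else 0) := by
        rw [← Finset.sum_comm]
        refine Finset.sum_congr rfl fun jj _ => ?_
        rw [fourierInd, Finset.mul_sum]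
        refine Finset.sum_congr rfl fun y _ => ?_
        rw [hvec_eq_chi, ite_mul, one_mul, zero_mul, mul_ite, mul_zero]
      have e2 : ∀ y : Fin (2*m) → ZMod p, ∑ jj : ZMod p,
          (if f y = jj ∧ y ≠ 0 then ee p jj * chi p x y else 0)
          = (if y ≠ 0 then ee p (f y) * chi p x y else 0) := by
        intro y
        by_cases hy : y = 0
        · simp [hy]
        · simp only [hy, ne_eq, not_false_eq_true, and_true, if_true]
          rw [Finset.sum_ite_eq univ (f y) (fun jj => ee p jj * chi p x y),
            if_pos (mem_univ _)]
      rw [e1, Finset.sum_congr rfl fun y _ => e2 y, ← Finset.sum_filter,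
        Finset.filter_ne' univ 0]
    have hwalsh : walsh f x = 1 + ∑ jj : ZMod p, ee p jj * fourierInd f jj x := by
      rw [hwalsh0, hAeq, ← Finset.add_sum_erase _ _ (mem_univ (0 : Fin (2*m) → ZMod p)),
        h0, ee_zero, chi_zero_right, one_mul]
    -- compute the chi-weighted sums
    have hsum1 : ∑ jj : ZMod p, ee p jj * (R jj : ℂ) = 1 := by
      have e1 : ∀ jj : ZMod p, (R jj : ℂ) = ((N / p : ℤ) : ℂ) + (if jj = 0 then 1 else 0) := by
        intro jj; rw [hR]; split_ifs <;> push_cast <;> ring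
      rw [Finset.sum_congr rfl fun jj _ => by rw [e1 jj, mul_add, mul_ite, mul_one, mul_zero]]
      rw [Finset.sum_add_distrib, ← Finset.sum_mul, sum_ee hp1, zero_mul, zero_add,
        Finset.sum_ite_eq' univ (0 : ZMod p) (fun jj => ee p jj), if_pos (mem_univ _), ee_zero]
    have hsum2 : ∑ jj : ZMod p, ee p jj * c jj = ee p i0 := by
      have e1 : ∀ jj : ZMod p, ee p jj * c jj = (if jj = i0 then ee p jj else 0) := by
        intro jj
        by_cases hjj : jj = i0
        · rw [if_pos hjj, hjj, hci0, mul_one]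
        · rw [if_neg hjj, hcne jj hjj, mul_zero]
      rw [Finset.sum_congr rfl fun jj _ => e1 jj,
        Finset.sum_ite_eq' univ i0 (fun jj => ee p jj), if_pos (mem_univ _)]
    -- identify i0 with fstar x
    have hfstar : fstar x = i0 := by
      have hd := hdual x
      have hd' : ee p (fstar x) * (N : ℂ) = 1 + ∑ jj : ZMod p, ee p jj * fourierInd f jj x := by
        rw [← hwalsh]; exact hd.symm ▸ rfl
      have e4 : ∑ jj : ZMod p, ee p jj * fourierInd f jj x
          = (N:ℂ) * ee p i0 - 1 := by
        rw [Finset.sum_congr rfl fun jj _ => by rw [hSc jj, mul_sub, mul_comm (ee p jj) ((N:ℂ) * c jj), mul_assoc, mul_comm (c jj) (ee p jj)]]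
        rw [Finset.sum_sub_distrib, ← Finset.mul_sum, hsum2, hsum1]
      rw [e4] at hd'
      have : ee p (fstar x) * (N : ℂ) = ee p i0 * (N : ℂ) := by rw [hd']; ring
      exact ee_inj (mul_right_cancel₀ hNzC this)
    -- conclude
    rw [if_neg hx0, mul_zero, sub_zero]
    have hrhs : (1 / (N : ℂ)) * fourierInd f i x + (R i : ℂ) / (N : ℂ) = c i := by
      rw [hc]; dsimp only; field_simp
    rw [hrhs]
    by_cases hii : i = i0
    · rw [if_pos ⟨by rw [hfstar, hii], hx0⟩, hii, hci0]
    · rw [if_neg (by rintro ⟨h, -⟩; exact hii (by rw [← h, hfstar])), hcne i hii]
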